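/- arXiv:1902.06576 — 3 statements merged into one kernel-verified Lean document; each statement's English description precedes it below -/
import Mathlib

section
/- Let V=(Q,D,Δ,w) be a 1-VASS with disequality tests and let s,t ∈ Q be states such that t is reachable from every state of Q in the underlying directed graph (Q,Δ). If (s,0) is unbounded in V, then (s,0) covers t. -/
namespace VASSPaper

/-- A 1-VASS with disequality tests: states `Q`, transition relation `delta`,
integer weights `w`, and for each state a cofinite set `D q ⊆ ℕ` of allowed counter values. -/
structure OneVASS (Q : Type) where
  delta : Q → Q → Prop
  w : Q → Q → ℤ
  D : Q → Set ℕ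
  cofinite : ∀ q, (D q)ᶜ.Finite

variable {Q : Type}

/-- A path is a nonempty sequence of states joined by transitions. -/
def IsPath (V : OneVASS Q) : List Q → Prop
  | [] => False
  | [_] => True
  | a :: b :: l => V.delta a b ∧ IsPath V (b :: l)

/-- The weight of a path: the sum of the weights of its transitions. -/
def pathWeight (V : OneVASS Q) (π : List Q) : ℤ :=
  (List.zipWith V.w π π.tail).sum

/-- The counter value at position `i` of the run over `π` starting with counter `z`. -/
def counterAt (V : OneVASS Q) (z : ℕ) (π : List Q) (i : ℕ) : ℤ :=
  (z : ℤ) + pathWeight V (π.take (i + 1))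

/-- `π` lifts to a run from counter value `z`: all counter values stay nonnegative. -/
def IsRun (V : OneVASS Q) (π : List Q) (z : ℕ) : Prop :=
  IsPath V π ∧ ∀ i, i < π.length → 0 ≤ counterAt V z π i

/-- A valid run additionally respects all disequality guards. -/
def IsValidRun (V : OneVASS Q) (π : List Q) (z : ℕ) : Prop :=
  IsRun V π z ∧ ∀ i, ∀ h : i < π.length, (counterAt V z π i).toNat ∈ V.D (π.get ⟨i, h⟩)

/-- `π` goes from configuration `c` to configuration `c'`. -/
def RunFromTo (V : OneVASS Q) (π : List Q) (c c' : Q × ℕ) : Prop :=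
  π.head? = some c.1 ∧ π.getLast? = some c'.1 ∧ (c'.2 : ℤ) = (c.2 : ℤ) + pathWeight V π

/-- `c'` is reachable from `c` by a valid run. -/
def Reaches (V : OneVASS Q) (c c' : Q × ℕ) : Prop :=
  ∃ π, IsValidRun V π c.2 ∧ RunFromTo V π c c'

/-- A configuration is unbounded if infinitely many configurations are reachable from it. -/
def Unbounded (V : OneVASS Q) (c : Q × ℕ) : Prop :=
  {c' | Reaches V c c'}.Infinite

/-- `(s,0)` covers the state `t`. -/
def Covers (V : OneVASS Q) (s t : Q) : Prop :=
  ∃ z, Reaches V (s, 0) (t, z)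

/-- Every state has at most one disequality guard. -/
def SingleGuard (V : OneVASS Q) : Prop :=
  ∀ q, V.D q = Set.univ ∨ ∃ g : ℕ, V.D q = {g}ᶜ

/-- The minimum weight of a (possibly empty) prefix of `π`. -/
def pmin (V : OneVASS Q) (π : List Q) : ℤ :=
  ((List.range (π.length + 1)).map fun i => pathWeight V (π.take i)).foldr min 0

/-- The maximum weight of a (possibly empty) suffix of `π`. -/
def smax (V : OneVASS Q) (π : List Q) : ℤ :=
  ((List.range (π.length + 1)).map fun i => pathWeight V (π.drop i)).foldr max 0

/-- A cycle on `q`: a path with at least one transition starting and ending at `q`. -/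
def IsCycleOn (V : OneVASS Q) (π : List Q) (q : Q) : Prop :=
  IsPath V π ∧ 2 ≤ π.length ∧ π.head? = some q ∧ π.getLast? = some q

/-- A simple cycle on `q`. -/
def IsSimpleCycleOn (V : OneVASS Q) (π : List Q) (q : Q) : Prop :=
  IsCycleOn V π q ∧ π.dropLast.Nodup

/-- The set of states lying on a positive-weight simple cycle. -/
def Qplus (V : OneVASS Q) : Set Q :=
  {q | ∃ π, IsSimpleCycleOn V π q ∧ 0 < pathWeight V π}

/-- `γ` is a valid choice of cycles: for each `q ∈ Q₊`, `γ q` is a simple positive cycle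
on `q` whose `pmin` is maximal among all positive-weight simple cycles on `q`. -/
def GammaChoice (V : OneVASS Q) (γ : Q → List Q) : Prop :=
  ∀ q ∈ Qplus V,
    IsSimpleCycleOn V (γ q) q ∧ 0 < pathWeight V (γ q) ∧
      ∀ π, IsSimpleCycleOn V π q → 0 < pathWeight V π → pmin V π ≤ pmin V (γ q)

/-- `Conf₊`: configurations `(q,z)` with `q ∈ Q₊` and `z + pmin (γ q) ≥ 0`. -/
def ConfPlus (V : OneVASS Q) (γ : Q → List Q) : Set (Q × ℕ) :=
  {c | c.1 ∈ Qplus V ∧ 0 ≤ (c.2 : ℤ) + pmin V (γ c.1)}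

/-- `W_q`, the weight of the chosen cycle `γ q`, as a natural number. -/
def Wnat (V : OneVASS Q) (γ : Q → List Q) (q : Q) : ℕ :=
  (pathWeight V (γ q)).toNat

/-- The `q`-residue class of `r` modulo `W_q`. -/
def resClass (V : OneVASS Q) (γ : Q → List Q) (q : Q) (r : ℕ) : Set (Q × ℕ) :=
  {c | c ∈ ConfPlus V γ ∧ c.1 = q ∧ c.2 % Wnat V γ q = r}

/-- `iterCycle π k` is the cycle `π` iterated `k+1` times. -/
def iterCycle (π : List Q) : ℕ → List Q
  | 0 => π
  | k + 1 => iterCycle π k ++ π.tail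

/-- Counter values `z < z'` at state `q` are connected by a valid run iterating `γ q`. -/
def chainLinked (V : OneVASS Q) (γ : Q → List Q) (q : Q) (z z' : ℕ) : Prop :=
  ∃ k, IsValidRun V (iterCycle (γ q) k) z ∧
    (z' : ℤ) = (z : ℤ) + pathWeight V (iterCycle (γ q) k)

/-- Any two configurations of `S` are connected by iterating `γ q`. -/
def ChainCond (V : OneVASS Q) (γ : Q → List Q) (q : Q) (S : Set (Q × ℕ)) : Prop :=
  ∀ c ∈ S, ∀ c' ∈ S, c.2 < c'.2 → chainLinked V γ q c.2 c'.2

/-- A `q`-chain inside the `q`-residue class of `r`: a maximal subset whose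
configurations are pairwise connected by iterating `γ q`. -/
def IsChainIn (V : OneVASS Q) (γ : Q → List Q) (q : Q) (r : ℕ) (C : Set (Q × ℕ)) : Prop :=
  C ⊆ resClass V γ q r ∧ ChainCond V γ q C ∧
    ∀ C', C ⊆ C' → C' ⊆ resClass V γ q r → ChainCond V γ q C' → C' = C

/-- A chain (in some residue class of some state of `Q₊`). -/
def IsChain (V : OneVASS Q) (γ : Q → List Q) (C : Set (Q × ℕ)) : Prop :=
  ∃ q r, q ∈ Qplus V ∧ r < Wnat V γ q ∧ IsChainIn V γ q r C

/-- A set of configurations is bounded if its counter values are bounded. -/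
def chainBounded (C : Set (Q × ℕ)) : Prop :=
  BddAbove (Prod.snd '' C)

/-- A residue class is trivial if it consists of a single unbounded chain. -/
def TrivialClass (V : OneVASS Q) (γ : Q → List Q) (q : Q) (r : ℕ) : Prop :=
  IsChainIn V γ q r (resClass V γ q r) ∧ ¬ chainBounded (resClass V γ q r)

/-- There is a valid run of length `k` (i.e. `k` transitions) from `c` into the set `S`. -/
def RunLenTo (V : OneVASS Q) (c : Q × ℕ) (S : Set (Q × ℕ)) (k : ℕ) : Prop :=
  ∃ π c', c' ∈ S ∧ IsValidRun V π c.2 ∧ RunFromTo V π c c' ∧ π.length = k + 1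

/-- Configurations of `Conf₊ \ Un` whose distance to `Un` is minimal among all
configurations of `Conf₊ \ Un`. -/
def Uprime (V : OneVASS Q) (γ : Q → List Q) (Un : Set (Q × ℕ)) : Set (Q × ℕ) :=
  {c | c ∈ ConfPlus V γ \ Un ∧
    ∃ k, RunLenTo V c Un k ∧
      ∀ c' ∈ ConfPlus V γ \ Un, ∀ j, RunLenTo V c' Un j → k ≤ j}

/-- `S` is downward closed in every chain. -/
def dcClosed (V : OneVASS Q) (γ : Q → List Q) (S : Set (Q × ℕ)) : Prop :=
  ∀ C, IsChain V γ C → ∀ c ∈ S ∩ C, ∀ c' ∈ C, c'.2 ≤ c.2 → c' ∈ S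

/-- The inductive sequence `U_n`: `U_0` is the union of the unbounded chains; `U_{n+1}` is the
smallest superset of `U_n ∪ U'_n` that is downward closed in every chain. -/
def U (V : OneVASS Q) (γ : Q → List Q) : ℕ → Set (Q × ℕ)
  | 0 => ⋃₀ {C | IsChain V γ C ∧ ¬ chainBounded C}
  | n + 1 => ⋂₀ {S | U V γ n ∪ Uprime V γ (U V γ n) ⊆ S ∧ dcClosed V γ S}

/-- `C` is an `n`-active bounded chain in the `q`-residue class of `r`. -/
def nActiveIn (V : OneVASS Q) (γ : Q → List Q) (q : Q) (r : ℕ) (n : ℕ)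
    (C : Set (Q × ℕ)) : Prop :=
  IsChainIn V γ q r C ∧ chainBounded C ∧
    ∃ c ∈ U V γ n ∩ resClass V γ q r, ∃ c' ∈ C, c.2 ≤ c'.2

/-- `δ_n(C)` for a `q`-chain `C`: configurations outside `U_n` whose counter value lies
between two counter values of `C \ U_n`. -/
def deltaC (V : OneVASS Q) (γ : Q → List Q) (n : ℕ) (q : Q) (C : Set (Q × ℕ)) :
    Set (Q × ℕ) :=
  {c | c ∈ ConfPlus V γ ∧ c.1 = q ∧ c ∉ U V γ n ∧
    ∃ z₁ z₂, (q, z₁) ∈ C \ U V γ n ∧ (q, z₂) ∈ C \ U V γ n ∧ z₁ ≤ c.2 ∧ c.2 ≤ z₂}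

/-- `δ_n(R)` for the `q`-residue class `R` of `r`: union of `δ_n(C)` over `n`-active chains. -/
def deltaR (V : OneVASS Q) (γ : Q → List Q) (n : ℕ) (q : Q) (r : ℕ) : Set (Q × ℕ) :=
  {c | ∃ C, nActiveIn V γ q r n C ∧ c ∈ deltaC V γ n q C}

/-- A positive-weight cycle (as a list of states). -/
def IsPosCycle (V : OneVASS Q) (π : List Q) : Prop :=
  2 ≤ π.length ∧ π.head? = π.getLast? ∧ 0 < pathWeight V π

/-- A path is primitive if no proper infix of it is a positive-weight cycle. -/
def Primitive (V : OneVASS Q) (π : List Q) : Prop :=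
  ∀ i l, (π.drop i).take l ≠ π → ¬ IsPosCycle V ((π.drop i).take l)
lemma pathWeight_nil (V : OneVASS Q) : pathWeight V ([] : List Q) = 0 := rfl

lemma pathWeight_single (V : OneVASS Q) (a : Q) : pathWeight V [a] = 0 := rfl

lemma pathWeight_cons (V : OneVASS Q) (a b : Q) (l : List Q) :
    pathWeight V (a :: b :: l) = V.w a b + pathWeight V (b :: l) := by
  simp [pathWeight]

lemma pathWeight_append (V : OneVASS Q) :
    ∀ (π₁ π₂ : List Q), π₁ ≠ [] → π₁.getLast? = π₂.head? →
    pathWeight V (π₁ ++ π₂.tail) = pathWeight V π₁ + pathWeight V π₂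
  | [], _, h, _ => absurd rfl h
  | [a], π₂, _, hj => by
      cases π₂ with
      | nil => simp at hj
      | cons b tl =>
        simp at hj
        subst hj
        simp [pathWeight_single]
  | a :: b :: l, π₂, _, hj => by
      have ih := pathWeight_append V (b :: l) π₂ (by simp) (by simpa using hj)
      simp only [List.cons_append] at *
      rw [pathWeight_cons, pathWeight_cons, ih]
      ring

lemma IsPath_append (V : OneVASS Q) :
    ∀ (π₁ π₂ : List Q), IsPath V π₁ → IsPath V π₂ → π₁.getLast? = π₂.head? →
    IsPath V (π₁ ++ π₂.tail)
  | [], _, h, _, _ => h.elim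
  | [a], π₂, _, h₂, hj => by
      cases π₂ with
      | nil => simp at hj
      | cons b tl =>
        simp at hj
        subst hj
        simpa using h₂
  | a :: b :: l, π₂, h₁, h₂, hj => by
      have ih := IsPath_append V (b :: l) π₂ h₁.2 h₂ (by simpa using hj)
      exact ⟨h₁.1, ih⟩

lemma counterAt_append_left (V : OneVASS Q) (z : ℕ) (π₁ τ : List Q) (i : ℕ)
    (h : i < π₁.length) : counterAt V z (π₁ ++ τ) i = counterAt V z π₁ i := by
  unfold counterAt
  rw [List.take_append, Nat.sub_eq_zero_of_le h, List.take_zero,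
    List.append_nil]

lemma counterAt_append_right (V : OneVASS Q) (z : ℕ) (π₁ π₂ : List Q) (j : ℕ)
    (hne : π₁ ≠ []) (hj : π₁.getLast? = π₂.head?) :
    counterAt V z (π₁ ++ π₂.tail) (π₁.length + j) =
      (z : ℤ) + pathWeight V π₁ + pathWeight V (π₂.take (j + 2)) := by
  unfold counterAt
  cases π₂ with
  | nil => simp at hj; exact absurd hj hne
  | cons x τ =>
    have h1 : (π₁ ++ τ).take (π₁.length + j + 1) = π₁ ++ τ.take (j + 1) := by
      rw [List.take_append, List.take_of_length_le (by omega)]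
      congr 2
      omega
    have h2 : ((x :: τ).take (j + 2)).tail = τ.take (j + 1) := by
      simp [List.take_succ_cons]
    rw [List.tail_cons, h1, ← h2,
      pathWeight_append V π₁ ((x :: τ).take (j + 2)) hne (by simpa using hj)]
    ring

lemma Reaches.trans {V : OneVASS Q} {c c' c'' : Q × ℕ}
    (h1 : Reaches V c c') (h2 : Reaches V c' c'') : Reaches V c c'' := by
  obtain ⟨π₁, ⟨⟨hp1, hn1⟩, hg1⟩, hh1, hl1, hw1⟩ := h1
  obtain ⟨π₂, ⟨⟨hp2, hn2⟩, hg2⟩, hh2, hl2, hw2⟩ := h2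
  have hne1 : π₁ ≠ [] := by intro h; subst h; simp at hh1
  have hne2 : π₂ ≠ [] := by intro h; subst h; simp at hh2
  have hj : π₁.getLast? = π₂.head? := by rw [hl1, hh2]
  have hlen2 : 1 ≤ π₂.length := List.length_pos_iff.mpr hne2
  have hlen : (π₁ ++ π₂.tail).length = π₁.length + π₂.length - 1 := by
    simp [List.length_tail]; omega
  -- counter value identities
  have hcnt : ∀ i, i < (π₁ ++ π₂.tail).length →
      (i < π₁.length ∧ counterAt V c.2 (π₁ ++ π₂.tail) i = counterAt V c.2 π₁ i) ∨
      (∃ j, i = π₁.length + j ∧ j + 1 < π₂.length ∧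
        counterAt V c.2 (π₁ ++ π₂.tail) i = counterAt V c'.2 π₂ (j + 1)) := by
    intro i hi
    by_cases hcase : i < π₁.length
    · exact Or.inl ⟨hcase, counterAt_append_left V c.2 π₁ π₂.tail i hcase⟩
    · refine Or.inr ⟨i - π₁.length, by omega, by rw [hlen] at hi; omega, ?_⟩
      have := counterAt_append_right V c.2 π₁ π₂ (i - π₁.length) hne1 hj
      rw [show π₁.length + (i - π₁.length) = i by omega] at this
      rw [this]
      unfold counterAt
      rw [hw1]
  refine ⟨π₁ ++ π₂.tail, ⟨⟨IsPath_append V π₁ π₂ hp1 hp2 hj, ?_⟩, ?_⟩, ?_, ?_, ?_⟩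
  · intro i hi
    rcases hcnt i hi with ⟨h, e⟩ | ⟨j, rfl, hjl, e⟩
    · rw [e]; exact hn1 i h
    · rw [e]; exact hn2 (j + 1) hjl
  · intro i hi
    rcases hcnt i hi with ⟨h, e⟩ | ⟨j, rfl, hjl, e⟩
    · have hget : (π₁ ++ π₂.tail).get ⟨i, hi⟩ = π₁.get ⟨i, h⟩ := by
        simp only [List.get_eq_getElem]
        exact List.getElem_append_left h
      rw [e, hget]; exact hg1 i h
    · have hget : (π₁ ++ π₂.tail).get ⟨π₁.length + j, hi⟩ = π₂.get ⟨j + 1, hjl⟩ := by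
        simp only [List.get_eq_getElem]
        rw [List.getElem_append_right (by omega)]
        simp [Nat.add_sub_cancel_left]
      rw [e, hget]; exact hg2 (j + 1) hjl
  · cases π₁ with
    | nil => exact absurd rfl hne1
    | cons a r => simpa using hh1
  · rcases hτ : π₂.tail with _ | ⟨y, rest⟩
    · have : π₂ = [c'.1] := by
        cases π₂ with
        | nil => exact absurd rfl hne2
        | cons x τ => simp at hτ hh2; rw [hτ, ← hh2]
      rw [this] at hl2
      simp at hl2
      rw [List.append_nil, hl1, hl2]
    · rw [List.getLast?_append_of_ne_nil _ (by simp), ← hτ]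
      cases π₂ with
      | nil => exact absurd rfl hne2
      | cons x τ =>
        rw [List.tail_cons] at hτ
        subst hτ
        rw [← hl2]
        cases rest <;> simp [List.getLast?_cons_cons]
  · rw [pathWeight_append V π₁ π₂ hne1 hj, hw2, hw1]
    ring

lemma exists_path_of_reflTransGen (V : OneVASS Q) {q t : Q}
    (h : Relation.ReflTransGen V.delta q t) :
    ∃ ρ : List Q, IsPath V ρ ∧ ρ.head? = some q ∧ ρ.getLast? = some t := by
  induction h using Relation.ReflTransGen.head_induction_on with
  | refl => exact ⟨[t], trivial, rfl, rfl⟩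
  | head hab _ ih =>
    obtain ⟨ρ, hp, hh, hl⟩ := ih
    cases ρ with
    | nil => simp at hh
    | cons b' rest =>
      simp only [List.head?_cons, Option.some.injEq] at hh
      subst hh
      exact ⟨_ :: b' :: rest, ⟨hab, hp⟩, rfl, by rw [List.getLast?_cons_cons]; exact hl⟩

lemma valid_run_of_large [Fintype Q] (V : OneVASS Q) (ρ : List Q) (hρ : IsPath V ρ) :
    ∃ N : ℕ, ∀ z : ℕ, N ≤ z →
      IsValidRun V ρ z ∧ 0 ≤ (z : ℤ) + pathWeight V ρ := by
  classical
  set M : ℕ := 1 + Finset.univ.sup (fun q : Q => (V.cofinite q).toFinset.sup id) with hM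
  have hMD : ∀ (q : Q) (n : ℕ), M ≤ n → n ∈ V.D q := by
    intro q n hn
    by_contra hc
    have h1 : n ∈ (V.cofinite q).toFinset := (Set.Finite.mem_toFinset _).mpr hc
    have h2 : n ≤ (V.cofinite q).toFinset.sup id := Finset.le_sup (f := id) h1
    have h3 : (V.cofinite q).toFinset.sup id ≤
        Finset.univ.sup (fun q : Q => (V.cofinite q).toFinset.sup id) :=
      Finset.le_sup (f := fun q : Q => (V.cofinite q).toFinset.sup id) (Finset.mem_univ q)
    omega
  set A : ℕ := (Finset.range (ρ.length + 1)).sup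
    (fun i => (pathWeight V (ρ.take i)).natAbs) with hA
  have hAle : ∀ i, i ≤ ρ.length → (pathWeight V (ρ.take i)).natAbs ≤ A := by
    intro i hi
    exact Finset.le_sup (f := fun i => (pathWeight V (ρ.take i)).natAbs) (Finset.mem_range.mpr (by omega))
  refine ⟨M + A, fun z hz => ?_⟩
  have key : ∀ i, i < ρ.length → (M : ℤ) ≤ counterAt V z ρ i := by
    intro i hi
    have := hAle (i + 1) (by omega)
    unfold counterAt
    omega
  have hfin : 0 ≤ (z : ℤ) + pathWeight V ρ := by
    have := hAle ρ.length le_rfl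
    rw [List.take_length] at this
    omega
  refine ⟨⟨⟨hρ, fun i hi => le_trans (by positivity) (key i hi)⟩, ?_⟩, hfin⟩
  intro i hi
  apply hMD
  have := key i hi
  omega

/-- if `t` is reachable from every state in the underlying graph and `(s,0)` is
unbounded, then `(s,0)` covers `t`. -/
theorem covers_of_unbounded_of_all_reach
    {Q : Type} [Fintype Q] (V : OneVASS Q) (s t : Q)
    (hall : ∀ q : Q, Relation.ReflTransGen V.delta q t)
    (hunb : Unbounded V (s, 0)) :
    Covers V s t := by
  classical
  have hq : ∃ q : Q, {z : ℕ | Reaches V (s, 0) (q, z)}.Infinite := by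
    by_contra hfin
    push_neg at hfin
    apply hunb
    have hsub : {c' | Reaches V (s, 0) c'} ⊆
        ⋃ q : Q, (fun z => (q, z)) '' {z | Reaches V (s, 0) (q, z)} := by
      rintro ⟨q, z⟩ h
      exact Set.mem_iUnion.mpr ⟨q, ⟨z, h, rfl⟩⟩
    exact Set.Finite.subset (Set.finite_iUnion fun q => (hfin q).image _) hsub
  obtain ⟨q, hq⟩ := hq
  obtain ⟨ρ, hρ, hh, hl⟩ := exists_path_of_reflTransGen V (hall q)
  obtain ⟨N, hN⟩ := valid_run_of_large V ρ hρ
  obtain ⟨z, hzmem, hzN⟩ := hq.exists_gt N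
  obtain ⟨hvalid, hpos⟩ := hN z (le_of_lt hzN)
  have h2 : Reaches V (q, z) (t, ((z : ℤ) + pathWeight V ρ).toNat) :=
    ⟨ρ, hvalid, hh, hl, by rw [Int.toNat_of_nonneg hpos]⟩
  exact ⟨_, Reaches.trans hzmem h2⟩

end VASSPaper
end

section
/- Let V=(Q,D,Δ,w) be a 1-VASS with disequality tests and let ρ be a valid run such that no internal configuration of ρ (i.e., no configuration other than the first and the last) belongs to Conf_+. Then the underlying path of ρ is primitive. -/
namespace VASSPaper

variable {Q : Type}

section Statement4Aux

lemma head?_eq_getElem?' (l : List Q) : l.head? = l[0]? := by cases l <;> simp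

lemma foldr_min_nonpos (L : List ℤ) : L.foldr min 0 ≤ 0 := by
  induction L with
  | nil => simp
  | cons a t ih => simp only [List.foldr_cons]; exact le_trans (min_le_right _ _) ih

lemma le_foldr_min (L : List ℤ) (c : ℤ) (hc : c ≤ 0) (h : ∀ x ∈ L, c ≤ x) :
    c ≤ L.foldr min 0 := by
  induction L with
  | nil => simpa
  | cons a t ih =>
      simp only [List.foldr_cons, le_min_iff]
      exact ⟨h a (by simp), ih fun x hx => h x (by simp [hx])⟩

lemma le_pmin (V : OneVASS Q) (l : List Q) (c : ℤ) (hc : c ≤ 0)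
    (h : ∀ i, i ≤ l.length → c ≤ pathWeight V (l.take i)) : c ≤ pmin V l := by
  apply le_foldr_min _ _ hc
  intro x hx
  simp only [List.mem_map, List.mem_range] at hx
  obtain ⟨i, hi, rfl⟩ := hx
  exact h i (by omega)

lemma pathWeight_cons_cons (V : OneVASS Q) (a b : Q) (t : List Q) :
    pathWeight V (a :: b :: t) = V.w a b + pathWeight V (b :: t) := by
  simp [pathWeight]

lemma pathWeight_eq_sum (V : OneVASS Q) (d : Q) :
    ∀ l : List Q, pathWeight V l
      = ∑ j ∈ Finset.range (l.length - 1), V.w (l.getD j d) (l.getD (j+1) d) := by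
  intro l
  induction l with
  | nil => simp [pathWeight]
  | cons a t ih =>
      cases t with
      | nil => simp [pathWeight]
      | cons b t' =>
          rw [pathWeight_cons_cons, ih]
          simp only [List.length_cons, Nat.add_sub_cancel]
          rw [Finset.sum_range_succ']
          simp [List.getD_cons_succ, List.getD_cons_zero]
          ring

lemma getD_eq_of_getElem? {l : List Q} {i : ℕ} {d x : Q} (h : l[i]? = some x) :
    l.getD i d = x := by
  rw [List.getD_eq_getElem?_getD, h]; rfl

lemma getD_eq_get' {l : List Q} {k : ℕ} (h : k < l.length) (d : Q) :
    l.getD k d = l[k] := by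
  rw [List.getD_eq_getElem?_getD, List.getElem?_eq_getElem h]; rfl

lemma isPath_iff (V : OneVASS Q) (d : Q) :
    ∀ l : List Q, IsPath V l ↔
      (l ≠ [] ∧ ∀ j, j + 1 < l.length → V.delta (l.getD j d) (l.getD (j+1) d)) := by
  intro l
  induction l with
  | nil => simp [IsPath]
  | cons a t ih =>
      cases t with
      | nil => simp [IsPath]
      | cons b t' =>
          constructor
          · rintro ⟨hab, hp⟩
            refine ⟨by simp, ?_⟩
            intro j hj
            cases j with
            | zero => simpa using hab
            | succ j' =>
                have := ((ih).mp hp).2 j' (by simpa [Nat.succ_lt_succ_iff] using hj)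
                simpa [List.getD_cons_succ] using this
          · rintro ⟨-, h⟩
            refine ⟨by simpa using h 0 (by simp), ?_⟩
            apply (ih).mpr
            refine ⟨by simp, ?_⟩
            intro j hj
            have := h (j+1) (by simpa using Nat.succ_lt_succ hj)
            simpa [List.getD_cons_succ] using this

lemma getD_map_range (s : ℕ → Q) {n i : ℕ} (h : i < n) (d : Q) :
    ((List.range n).map s).getD i d = s i := by
  apply getD_eq_of_getElem?
  simp [List.getElem?_map, List.getElem?_range, h]

/-- The key combinatorial extraction: from a positive cycle (given as a state
sequence) one can extract a positive simple cycle on one of its states whose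
`pmin` dominates the suffix partial sums. -/
lemma claimE (V : OneVASS Q) :
    ∀ n, 1 ≤ n → ∀ s : ℕ → Q,
      (∀ t, t < n → V.delta (s t) (s (t+1))) → s n = s 0 →
      0 < ∑ r ∈ Finset.range n, V.w (s r) (s (r+1)) →
      ∃ j, j ≤ n ∧ ∃ δ, IsSimpleCycleOn V δ (s j) ∧ 0 < pathWeight V δ ∧
        ∀ c : ℤ, c ≤ 0 →
          (∀ t, j ≤ t → t ≤ n →
            c ≤ (∑ r ∈ Finset.range t, V.w (s r) (s (r+1)))
              - ∑ r ∈ Finset.range j, V.w (s r) (s (r+1))) →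
          c ≤ pmin V δ := by
  intro n
  induction n using Nat.strong_induction_on with
  | _ n IH =>
  intro hn s hs hcyc hpos
  set A : ℕ → ℤ := fun t => ∑ r ∈ Finset.range t, V.w (s r) (s (r+1)) with hA
  have hAshift : ∀ a t : ℕ,
      (∑ r ∈ Finset.range t, V.w (s (a+r)) (s (a+r+1))) = A (a+t) - A a := by
    intro a t
    induction t with
    | zero => simp
    | succ t iht =>
        rw [Finset.sum_range_succ, iht, hA]
        simp only []
        rw [show a + (t+1) = (a+t) + 1 by omega, Finset.sum_range_succ]
        ring
  by_cases hinj : ∀ u, u < n → ∀ v, v < n → s u = s v → u = v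
  · -- the sequence is injective on [0,n): it yields a simple cycle
    refine ⟨0, Nat.zero_le n, (List.range (n+1)).map s, ⟨⟨?_, ?_, ?_, ?_⟩, ?_⟩, ?_, ?_⟩
    · rw [isPath_iff V (s 0)]
      refine ⟨by simp [List.range_succ], ?_⟩
      intro j hj
      simp only [List.length_map, List.length_range] at hj
      rw [getD_map_range s (by omega), getD_map_range s (by omega)]
      exact hs j (by omega)
    · simp; omega
    · rw [head?_eq_getElem?']
      simp [List.getElem?_map, List.getElem?_range]
    · rw [List.getLast?_eq_getElem?]
      simp [List.getElem?_map, List.getElem?_range, hcyc]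
    · have : ((List.range (n+1)).map s).dropLast = (List.range n).map s := by
        rw [List.range_succ, List.map_append]
        simp
      rw [this]
      exact (List.nodup_range).map_on
        (fun x hx y hy hxy =>
          hinj x (List.mem_range.mp hx) y (List.mem_range.mp hy) hxy)
    · rw [pathWeight_eq_sum V (s 0)]
      simp only [List.length_map, List.length_range, Nat.add_sub_cancel]
      calc (0:ℤ) < ∑ r ∈ Finset.range n, V.w (s r) (s (r+1)) := hpos
        _ = _ := Finset.sum_congr rfl fun r hr => by
            rw [getD_map_range s (by simp at hr; omega),
              getD_map_range s (by simp at hr; omega)]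
    · intro c hc hbound
      apply le_pmin V _ c hc
      intro i hi
      simp only [List.length_map, List.length_range] at hi
      rw [← List.map_take, List.take_range]
      have hmin : min i (n+1) - 1 ≤ n := by omega
      rw [pathWeight_eq_sum V (s 0)]
      simp only [List.length_map, List.length_range]
      have := hbound (min i (n+1) - 1) (Nat.zero_le _) hmin
      simp only [hA, Finset.range_zero, Finset.sum_empty, sub_zero] at this
      calc c ≤ ∑ r ∈ Finset.range (min i (n+1) - 1), V.w (s r) (s (r+1)) := this
        _ = _ := Finset.sum_congr rfl fun r hr => by
            rw [getD_map_range s (by simp at hr; omega),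
              getD_map_range s (by simp at hr; omega)]
  · -- there is a repetition: shorten the cycle
    push_neg at hinj
    obtain ⟨u₀, hu₀, v₀, hv₀, hsuv₀, hne₀⟩ := hinj
    obtain ⟨u, v, huv, hu, hv, hsuv⟩ :
        ∃ u v, u < v ∧ v < n ∧ u < n ∧ s u = s v := by
      rcases lt_or_gt_of_ne hne₀ with h | h
      · exact ⟨u₀, v₀, h, hv₀, hu₀, hsuv₀⟩
      · exact ⟨v₀, u₀, h, hu₀, hv₀, hsuv₀.symm⟩
    set D := v - u with hD
    by_cases hT : 0 < A v - A u
    · -- the inner cycle is positive: recurse on it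
      obtain ⟨j₁, hj₁, δ, hδc, hδpos, hδpmin⟩ :=
        IH D (by omega) (by omega) (fun t => s (u+t))
          (fun t ht => by
            have := hs (u+t) (by omega)
            rw [show u+t+1 = u+(t+1) by omega] at this
            exact this)
          (by show s (u + D) = s (u + 0)
              rw [show u + D = v by omega, show u + 0 = u from rfl]; exact hsuv.symm)
          (by
            have : (∑ r ∈ Finset.range D, V.w (s (u+r)) (s (u+(r+1))))
                = A (u+D) - A u := by
              rw [← hAshift u D]
              exact Finset.sum_congr rfl fun r hr => by rw [show u+(r+1) = u+r+1 by omega]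
            rw [this, show u + D = v by omega]
            exact hT)
      refine ⟨u + j₁, by omega, δ, hδc, hδpos, ?_⟩
      intro c hc hbound
      apply hδpmin c hc
      intro t ht htD
      have h1 : (∑ r ∈ Finset.range t, V.w (s (u+r)) (s (u+(r+1)))) = A (u+t) - A u := by
        rw [← hAshift u t]
        exact Finset.sum_congr rfl fun r hr => by rw [show u+(r+1) = u+r+1 by omega]
      have h2 : (∑ r ∈ Finset.range j₁, V.w (s (u+r)) (s (u+(r+1)))) = A (u+j₁) - A u := by
        rw [← hAshift u j₁]
        exact Finset.sum_congr rfl fun r hr => by rw [show u+(r+1) = u+r+1 by omega]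
      rw [h1, h2]
      have := hbound (u+t) (by omega) (by omega)
      simp only [hA] at this ⊢
      linarith
    · -- the inner cycle is nonpositive: excise it and recurse
      push_neg at hT
      set n' := n - D with hn'
      set s' : ℕ → Q := fun t => if t < u then s t else s (t + D) with hs'
      have hDpos : 1 ≤ D := by omega
      have hn'1 : 1 ≤ n' := by omega
      have hn'lt : n' < n := by omega
      have hun' : u ≤ n' := by omega
      have kk : ∀ t, t ≤ u → s' t = s t := by
        intro t ht
        by_cases h : t < u
        · simp [hs', h]
        · have htu : t = u := by omega
          simp only [hs', show ¬ (t < u) by omega, if_false]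
          rw [show t + D = v by omega, htu]
          exact hsuv.symm
      have khi : ∀ t, u ≤ t → s' t = s (t + D) := by
        intro t ht
        by_cases h : t < u
        · omega
        · simp [hs', h]
      have hterm : ∀ t, t < u → V.w (s' t) (s' (t+1)) = V.w (s t) (s (t+1)) := by
        intro t ht
        rw [kk t (by omega), kk (t+1) (by omega)]
      have htermhi : ∀ t, u ≤ t → V.w (s' t) (s' (t+1)) = V.w (s (t+D)) (s (t+D+1)) := by
        intro t ht
        rw [khi t ht, khi (t+1) (by omega), show t+1+D = t+D+1 by omega]
      set A' : ℕ → ℤ := fun t => ∑ r ∈ Finset.range t, V.w (s' r) (s' (r+1)) with hA'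
      have hA'lo : ∀ t, t ≤ u → A' t = A t := by
        intro t ht
        exact Finset.sum_congr rfl fun r hr => hterm r (by simp at hr; omega)
      have hA'hi : ∀ t, u ≤ t → A' t = A (t + D) - (A v - A u) := by
        intro t ht
        have : A' t = A' u + ∑ r ∈ Finset.Ico u t, V.w (s' r) (s' (r+1)) := by
          rw [hA']
          simp only []
          rw [Finset.range_eq_Ico, ← Finset.sum_Ico_consecutive _ (Nat.zero_le u) ht,
            ← Finset.range_eq_Ico]
        rw [this, hA'lo u le_rfl]
        have : (∑ r ∈ Finset.Ico u t, V.w (s' r) (s' (r+1)))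
            = ∑ r ∈ Finset.Ico v (t + D), V.w (s r) (s (r+1)) := by
          rw [Finset.sum_Ico_eq_sum_range, Finset.sum_Ico_eq_sum_range]
          rw [show t + D - v = t - u by omega]
          refine Finset.sum_congr rfl fun r hr => ?_
          rw [htermhi (u+r) (by omega), show u+r+D = v+r by omega,
            show v+r+1 = v + r + 1 from rfl]
        rw [this, Finset.sum_Ico_eq_sub _ (by omega : v ≤ t + D)]
        have : A (t+D) = ∑ r ∈ Finset.range (t+D), V.w (s r) (s (r+1)) := rfl
        have : A v = ∑ r ∈ Finset.range v, V.w (s r) (s (r+1)) := rfl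
        simp only [hA]
        ring
      obtain ⟨j', hj', δ, hδc, hδpos, hδpmin⟩ :=
        IH n' hn'lt hn'1 s'
          (fun t ht => by
            by_cases h : t + 1 ≤ u
            · rw [kk t (by omega), kk (t+1) h]
              exact hs t (by omega)
            · by_cases h2 : t < u
              · omega
              · rw [khi t (by omega), khi (t+1) (by omega), show t+1+D = t+D+1 by omega]
                exact hs (t+D) (by omega))
          (by
            rw [khi n' hun', kk 0 (Nat.zero_le u), show n' + D = n by omega]
            exact hcyc)
          (by
            have h1 : A' n' = A n - (A v - A u) := by
              rw [hA'hi n' hun', show n' + D = n by omega]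
            have : (0:ℤ) < A n - (A v - A u) := by
              have : 0 < A n := hpos
              linarith
            rw [hA'] at h1
            simp only [hA] at h1 this ⊢
            rw [h1]
            exact this)
      by_cases hju : j' < u
      · refine ⟨j', by omega, δ, by rwa [kk j' (by omega)] at hδc, hδpos, ?_⟩
        intro c hc hbound
        apply hδpmin c hc
        intro t ht htn'
        have hAj : A' j' = A j' := hA'lo j' (by omega)
        by_cases h : t ≤ u
        · have : A' t = A t := hA'lo t h
          have hb := hbound t ht (by omega)
          simp only [hA, hA'] at *
          rw [this, hAj] at *
          linarith [hb]
        · have h1 : A' t = A (t + D) - (A v - A u) := hA'hi t (by omega)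
          have hb := hbound (t + D) (by omega) (by omega)
          simp only [hA, hA'] at *
          rw [h1, hAj] at *
          linarith [hb, hT]
      · refine ⟨j' + D, by omega, δ, by rwa [khi j' (by omega)] at hδc, hδpos, ?_⟩
        intro c hc hbound
        apply hδpmin c hc
        intro t ht htn'
        have h1 : A' t = A (t + D) - (A v - A u) := hA'hi t (by omega)
        have h2 : A' j' = A (j' + D) - (A v - A u) := hA'hi j' (by omega)
        have hb := hbound (t + D) (by omega) (by omega)
        simp only [hA, hA'] at *
        rw [h1, h2]
        linarith [hb]

end Statement4Aux

/-- a valid run none of whose internal configurations lies in `Conf₊`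
has a primitive underlying path. -/
theorem primitive_of_no_internal_confPlus
    {Q : Type} [Fintype Q] (V : OneVASS Q) (γ : Q → List Q) (hγ : GammaChoice V γ)
    (π : List Q) (z : ℕ) (hrun : IsValidRun V π z)
    (hint : ∀ i, ∀ h : i < π.length, 0 < i → i + 1 < π.length →
      (π.get ⟨i, h⟩, (counterAt V z π i).toNat) ∉ ConfPlus V γ) :
    Primitive V π := by
  intro a l hne hposcyc
  obtain ⟨hlen2, hheadlast, hwpos⟩ := hposcyc
  obtain ⟨⟨hpath, hnonneg⟩, -⟩ := hrun
  have hπne : π ≠ [] := by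
    intro h; rw [h] at hpath; exact hpath
  set d : Q := π.head hπne with hd
  set σ : List Q := (π.drop a).take l with hσ
  set len := π.length with hlen
  set m := σ.length with hm
  have hmval : m = min l (len - a) := by simp [hm, hσ, hlen]
  have hmlen : a + m ≤ len ∧ 2 ≤ m ∧ m ≤ l := by
    refine ⟨?_, hlen2, ?_⟩ <;> omega
  have hmlt : m < len := by
    rcases Nat.lt_or_ge m len with h | h
    · exact h
    · exfalso; apply hne
      have hi0 : a = 0 := by omega
      have hl : len ≤ l := by omega
      rw [hσ, hi0, List.drop_zero]
      exact List.take_of_length_le (by rw [← hlen]; omega)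
  set n := m - 1 with hn
  have hn1 : 1 ≤ n := by omega
  set s : ℕ → Q := fun t => π.getD (a + t) d with hs
  have hσget : ∀ t, t < m → σ[t]? = π[a + t]? := by
    intro t ht
    rw [hσ, List.getElem?_take, if_pos (by omega)]
    exact List.getElem?_drop
  have hσgetD : ∀ t, t < m → σ.getD t d = s t := by
    intro t ht
    rw [List.getD_eq_getElem?_getD, hσget t ht, ← List.getD_eq_getElem?_getD]
  have hsget : ∀ t, a + t < len → π[a + t]? = some (s t) := by
    intro t ht
    have h' : a + t < π.length := by rw [← hlen]; exact ht
    rw [List.getElem?_eq_getElem h']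
    show some _ = some (π.getD (a + t) d)
    rw [getD_eq_get' h' d]
  have htrans : ∀ t, t < n → V.delta (s t) (s (t + 1)) := by
    intro t ht
    have := ((isPath_iff V d π).mp hpath).2 (a + t) (by omega)
    rw [show a + t + 1 = a + (t + 1) by omega] at this
    exact this
  have hcycfun : s n = s 0 := by
    have h0 : σ[0]? = some (s 0) := by rw [hσget 0 (by omega), hsget 0 (by omega)]
    have hn' : σ[m - 1]? = some (s n) := by
      rw [hσget (m-1) (by omega), hn, hsget (m-1) (by omega)]
    rw [head?_eq_getElem?', List.getLast?_eq_getElem?, ← hm, h0] at hheadlast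
    rw [hn] at hn'
    rw [hn' ] at hheadlast
    exact (Option.some_injective _ hheadlast).symm
  have hsum : 0 < ∑ r ∈ Finset.range n, V.w (s r) (s (r + 1)) := by
    rw [pathWeight_eq_sum V d σ] at hwpos
    rw [← hm, ← hn] at hwpos
    calc (0:ℤ) < _ := hwpos
      _ = _ := Finset.sum_congr rfl fun r hr => by
          rw [hσgetD r (by simp at hr; omega), hσgetD (r+1) (by simp at hr; omega)]
  -- prefix-weight formula for π
  have hP : ∀ k, k < len → pathWeight V (π.take (k + 1))
      = ∑ j ∈ Finset.range k, V.w (π.getD j d) (π.getD (j + 1) d) := by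
    intro k hk
    rw [pathWeight_eq_sum V d (π.take (k+1))]
    have hlen' : (π.take (k+1)).length = k + 1 := by
      rw [List.length_take]; omega
    rw [hlen', Nat.add_sub_cancel]
    refine Finset.sum_congr rfl fun r hr => ?_
    simp only [Finset.mem_range] at hr
    rw [List.getD_eq_getElem?_getD, List.getElem?_take, if_pos (by omega),
      ← List.getD_eq_getElem?_getD,
      List.getD_eq_getElem?_getD (l := π.take (k+1)), List.getElem?_take, if_pos (by omega),
      ← List.getD_eq_getElem?_getD]
  set A : ℕ → ℤ := fun t => ∑ r ∈ Finset.range t, V.w (s r) (s (r + 1)) with hA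
  have hcount : ∀ t, t ≤ n → counterAt V z π (a + t) = counterAt V z π a + A t := by
    intro t ht
    rw [counterAt, counterAt, hP (a + t) (by omega), hP a (by omega)]
    have : (∑ j ∈ Finset.range (a + t), V.w (π.getD j d) (π.getD (j + 1) d))
        - ∑ j ∈ Finset.range a, V.w (π.getD j d) (π.getD (j + 1) d) = A t := by
      rw [← Finset.sum_Ico_eq_sub _ (by omega : a ≤ a + t),
        Finset.sum_Ico_eq_sum_range]
      rw [show a + t - a = t by omega]
      exact Finset.sum_congr rfl fun r hr => rfl
    linarith [this]
  have hnn : ∀ k, k < len → 0 ≤ counterAt V z π k := fun k hk => hnonneg k hk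
  -- apply the extraction lemma
  obtain ⟨j, hj, δ, hδsc, hδpos, hδpmin⟩ := claimE V n hn1 s htrans hcycfun hsum
  have hQp : s j ∈ Qplus V := ⟨δ, hδsc, hδpos⟩
  have hpm : pmin V δ ≤ pmin V (γ (s j)) := (hγ (s j) hQp).2.2 δ hδsc hδpos
  have hγpos := (hγ (s j) hQp).2.1
  -- the main bound
  have hbound0 : -(counterAt V z π (a + j)) ≤ pmin V δ := by
    apply hδpmin _ (by linarith [hnn (a+j) (by omega)])
    intro t htj htn
    have h1 := hcount t htn
    have h2 := hcount j hj
    have h3 := hnn (a + t) (by omega)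
    simp only [hA] at h1 h2 ⊢
    linarith
  -- contradiction helper
  have main : ∀ k, ∀ hk : k < len, 0 < k → k + 1 < len → π.getD k d = s j →
      0 ≤ counterAt V z π k + pmin V (γ (s j)) → False := by
    intro k hk h0 h1 hstate hv
    apply hint k (by rw [← hlen]; exact hk) h0 (by rw [← hlen]; exact h1)
    have hget : π.get ⟨k, by rw [← hlen]; exact hk⟩ = s j := by
      rw [← hstate]
      exact (getD_eq_get' (by rw [← hlen]; exact hk) d).symm
    constructor
    · rw [hget]; exact hQp
    · rw [hget, Int.toNat_of_nonneg (hnn k hk)]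
      exact hv
  by_cases hc1 : 0 < a + j ∧ a + j + 1 < len
  · exact main (a + j) (by omega) hc1.1 hc1.2 rfl
      (by linarith [hbound0, hpm, hnn (a+j) (by omega)])
  · push_neg at hc1
    by_cases hc2 : a + j = 0
    · -- a = 0, j = 0 : use position n instead
      have ha0 : a = 0 := by omega
      have hj0 : j = 0 := by omega
      apply main n (by omega) (by omega) (by omega)
      · rw [show n = a + n by omega]
        show s n = s j
        rw [hcycfun, hj0]
      · have h1 := hcount n le_rfl
        have hAn : 0 < A n := hsum
        have hb : -(counterAt V z π (a + j)) ≤ pmin V (γ (s j)) := le_trans hbound0 hpm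
        have hb' : -(counterAt V z π (a + 0)) ≤ pmin V (γ (s j)) := by
          rw [show a + 0 = a + j by omega]; exact hb
        have h2 := hcount 0 (by omega)
        have hn0 : counterAt V z π n = counterAt V z π (a + n) := by
          rw [show a + n = n by omega]
        rw [hn0, h1]
        have hA0 : A 0 = 0 := by simp [hA]
        rw [hA0] at h2
        linarith
    · -- a + j + 1 = len : then j = n, use position a instead
      have h1 : a + j + 1 = len := by
        have := hc1 (by omega)
        omega
      have hjn : j = n := by omega
      have han : a + n = len - 1 := by omega
      have ha1 : 1 ≤ a := by
        by_contra h
        have : a = 0 := by omega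
        omega
      apply main a (by omega) (by omega) (by omega)
      · show s 0 = s j
        rw [hjn, ← hcycfun]
      · have hb : -(counterAt V z π a) ≤ pmin V δ := by
          apply hδpmin _ (by linarith [hnn a (by omega)])
          intro t htj htn
          have ht' : t = n := by omega
          rw [ht', hjn]
          simp only [sub_self]
          linarith [hnn a (by omega)]
        linarith [hb, hpm]


end VASSPaper
end

section
/- Let V=(Q,D,Δ,w) be a 1-VASS with disequality tests in which every state has at most one disequality guard, and let q ∈ Q_+. Then the distinct q-chains contained in a q-residue class partition that residue class, and every q-residue class is a disjoint union of at most 2|Q| bounded chains and exactly one unbounded chain. -/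
namespace VASSPaper

variable {Q : Type}

section ListLemmas
variable (V : OneVASS Q)

/-- transitions list -/
def trans (π : List Q) : List ℤ := List.zipWith V.w π π.tail

lemma trans_length (π : List Q) : (trans V π).length = π.length - 1 := by
  cases π with
  | nil => simp [trans]
  | cons a t => simp [trans]

lemma trans_take (π : List Q) (i : ℕ) :
    trans V (π.take (i+1)) = (trans V π).take i := by
  induction π generalizing i with
  | nil => simp [trans]
  | cons a t ih =>
    cases t with
    | nil => simp [trans]
    | cons b t' =>
      cases i with
      | zero => simp [trans]
      | succ j =>
        have := ih j
        simp only [trans] at this ⊢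
        simp only [List.take_succ_cons, List.tail_cons] at this ⊢
        simpa using this

lemma counterAt_eq (z : ℕ) (π : List Q) (i : ℕ) :
    counterAt V z π i = (z : ℤ) + ((trans V π).take i).sum := by
  rw [counterAt, pathWeight, ← trans, ← trans_take]

lemma pathWeight_eq (π : List Q) : pathWeight V π = (trans V π).sum := rfl

lemma trans_append (A B : List Q) (s : Q) (hA : A.getLast? = some s)
    (hB : B.head? = some s) :
    trans V (A ++ B.tail) = trans V A ++ trans V B := by
  induction A with
  | nil => simp at hA
  | cons a A' ih =>
    cases A' with
    | nil =>
      simp only [List.getLast?_singleton, Option.some.injEq] at hA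
      subst hA
      cases B with
      | nil => simp at hB
      | cons b B' =>
        simp only [List.head?_cons, Option.some.injEq] at hB
        subst hB
        simp [trans]
    | cons a' A'' =>
      have hA' : (a' :: A'').getLast? = some s := by
        rw [← hA]; simp [List.getLast?_cons_cons]
      have := ih hA'
      simp only [trans, List.cons_append, List.tail_cons] at this ⊢
      cases A'' with
      | nil =>
        cases B with
        | nil => simp at hB
        | cons b B' => simpa using this
      | cons x xs => simpa using this

lemma isPath_append (A B : List Q) (s : Q) (hA : A.getLast? = some s)
    (hB : B.head? = some s) :
    IsPath V (A ++ B.tail) ↔ (IsPath V A ∧ IsPath V B) := by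
  induction A with
  | nil => simp at hA
  | cons a A' ih =>
    cases A' with
    | nil =>
      simp only [List.getLast?_singleton, Option.some.injEq] at hA
      subst hA
      cases B with
      | nil => simp at hB
      | cons b B' =>
        simp only [List.head?_cons, Option.some.injEq] at hB
        subst hB
        simp [IsPath]
    | cons a' A'' =>
      have hA' : (a' :: A'').getLast? = some s := by
        rw [← hA]; simp [List.getLast?_cons_cons]
      have := ih hA'
      simp only [List.cons_append] at this ⊢
      constructor
      · rintro ⟨h1, h2⟩
        rw [this] at h2
        exact ⟨⟨h1, h2.1⟩, h2.2⟩
      · rintro ⟨⟨h1, h2⟩, h3⟩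
        exact ⟨h1, this.mpr ⟨h2, h3⟩⟩

end ListLemmas
section RunLemmas
variable (V : OneVASS Q)

/-- convenient restatement of valid runs, via `getElem?` -/
def OK (π : List Q) (z : ℕ) : Prop :=
  IsPath V π ∧ ∀ i x, π[i]? = some x →
    0 ≤ (z : ℤ) + ((trans V π).take i).sum ∧
    ((z : ℤ) + ((trans V π).take i).sum).toNat ∈ V.D x

lemma isValidRun_iff_OK (π : List Q) (z : ℕ) :
    IsValidRun V π z ↔ OK V π z := by
  constructor
  · rintro ⟨⟨hp, hnn⟩, hg⟩
    refine ⟨hp, fun i x hx => ?_⟩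
    have hi : i < π.length := by
      by_contra hc
      rw [List.getElem?_eq_none (by omega)] at hx
      simp at hx
    have h1 := hnn i hi
    have h2 := hg i hi
    rw [counterAt_eq] at h1 h2
    have : π[i]'hi = x := by
      have := List.getElem?_eq_getElem hi
      rw [this] at hx
      exact Option.some.inj hx
    rw [List.get_eq_getElem, this] at h2
    exact ⟨h1, h2⟩
  · rintro ⟨hp, h⟩
    refine ⟨⟨hp, fun i hi => ?_⟩, fun i hi => ?_⟩
    · rw [counterAt_eq]
      exact (h i (π[i]'hi) (List.getElem?_eq_getElem hi)).1
    · rw [counterAt_eq, List.get_eq_getElem]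
      exact (h i (π[i]'hi) (List.getElem?_eq_getElem hi)).2

lemma OK_append (A B : List Q) (s : Q) (hA : A.getLast? = some s)
    (hB : B.head? = some s) (z z' : ℕ)
    (hz' : (z' : ℤ) = (z : ℤ) + pathWeight V A) :
    OK V (A ++ B.tail) z ↔ (OK V A z ∧ OK V B z') := by
  have hAne : A ≠ [] := by rintro rfl; simp at hA
  have hBne : B ≠ [] := by rintro rfl; simp at hB
  have hAlen : 1 ≤ A.length := List.length_pos_iff.mpr hAne
  have hBlen : 1 ≤ B.length := List.length_pos_iff.mpr hBne
  have htr : trans V (A ++ B.tail) = trans V A ++ trans V B :=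
    trans_append V A B s hA hB
  have hlen : (A ++ B.tail).length = A.length + B.length - 1 := by
    simp [List.length_append, List.length_tail]; omega
  have htrAlen : (trans V A).length = A.length - 1 := trans_length V A
  have htrBlen : (trans V B).length = B.length - 1 := trans_length V B
  have hcount : ∀ i, i < A.length →
      ((trans V (A ++ B.tail)).take i).sum = ((trans V A).take i).sum := by
    intro i hi
    rw [htr, List.take_append_of_le_length (by omega)]
  have hcount2 : ∀ i, A.length - 1 ≤ i →
      ((trans V (A ++ B.tail)).take i).sum
        = pathWeight V A + ((trans V B).take (i - (A.length - 1))).sum := by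
    intro i hi
    rw [htr, List.take_append, List.sum_append,
        List.take_of_length_le (by omega), pathWeight_eq, htrAlen]
  have hstate : ∀ i, i < A.length → (A ++ B.tail)[i]? = A[i]? := by
    intro i hi
    rw [List.getElem?_append]; simp [hi]
  have hstate2 : ∀ i, A.length ≤ i →
      (A ++ B.tail)[i]? = B[i - (A.length - 1)]? := by
    intro i hi
    rw [List.getElem?_append_right (by omega), ← List.drop_one,
        List.getElem?_drop]
    congr 1
    omega
  have hheadB : B[0]? = some s := by
    rw [← List.head?_eq_getElem?]; exact hB
  have hlastA : A[A.length - 1]? = some s := by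
    rw [← List.getLast?_eq_getElem?]; exact hA
  have hwA : ((trans V A).take (A.length - 1)).sum = pathWeight V A := by
    rw [List.take_of_length_le (by omega), pathWeight_eq]
  constructor
  · rintro ⟨hp, h⟩
    have hpA : IsPath V A ∧ IsPath V B := (isPath_append V A B s hA hB).mp hp
    refine ⟨⟨hpA.1, fun i x hx => ?_⟩, ⟨hpA.2, fun j x hx => ?_⟩⟩
    · have hi : i < A.length := by
        by_contra hc
        rw [List.getElem?_eq_none (by omega)] at hx
        simp at hx
      have := h i x (by rw [hstate i hi]; exact hx)
      rwa [hcount i hi] at this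
    · have hj : j < B.length := by
        by_contra hc
        rw [List.getElem?_eq_none (by omega)] at hx
        simp at hx
      rcases Nat.eq_zero_or_pos j with rfl | hj1
      · have hxs : x = s := by rw [hheadB] at hx; exact (Option.some.inj hx).symm
        have := h (A.length - 1) s
          (by rw [hstate (A.length - 1) (by omega)]; exact hlastA)
        rw [hcount (A.length - 1) (by omega), hwA, ← hz'] at this
        simpa [hxs] using this
      · have := h (A.length - 1 + j) x
          (by rw [hstate2 (A.length - 1 + j) (by omega)]
              have : A.length - 1 + j - (A.length - 1) = j := by omega
              rw [this]; exact hx)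
        rw [hcount2 (A.length - 1 + j) (by omega)] at this
        have he : A.length - 1 + j - (A.length - 1) = j := by omega
        rw [he, ← add_assoc, ← hz'] at this
        exact this
  · rintro ⟨⟨hpA, hA'⟩, ⟨hpB, hB'⟩⟩
    refine ⟨(isPath_append V A B s hA hB).mpr ⟨hpA, hpB⟩, fun i x hx => ?_⟩
    have hi : i < (A ++ B.tail).length := by
      by_contra hc
      rw [List.getElem?_eq_none (by omega)] at hx
      simp at hx
    rw [hlen] at hi
    rcases lt_or_ge i A.length with h1 | h1
    · rw [hstate i h1] at hx
      have := hA' i x hx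
      rwa [← hcount i h1] at this
    · rw [hstate2 i h1] at hx
      have := hB' (i - (A.length - 1)) x hx
      rw [hz', add_assoc, ← hcount2 i (by omega)] at this
      exact this

end RunLemmas
section CycleLemmas
variable (V : OneVASS Q) {π : List Q} {q : Q}

lemma pathWeight_append_tail (A B : List Q) (s : Q) (hA : A.getLast? = some s)
    (hB : B.head? = some s) :
    pathWeight V (A ++ B.tail) = pathWeight V A + pathWeight V B := by
  rw [pathWeight_eq, pathWeight_eq, pathWeight_eq, trans_append V A B s hA hB,
    List.sum_append]

lemma tail_ne_nil_of_two_le (hlen2 : 2 ≤ π.length) : π.tail ≠ [] := by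
  intro h
  have h2 := List.length_tail (l := π)
  rw [h] at h2
  simp at h2
  omega

lemma iterCycle_getLast? (hlast : π.getLast? = some q) (hlen2 : 2 ≤ π.length) :
    ∀ k, (iterCycle π k).getLast? = some q := by
  intro k
  induction k with
  | zero => exact hlast
  | succ k ih =>
    have htne : π.tail ≠ [] := tail_ne_nil_of_two_le hlen2
    rw [iterCycle, List.getLast?_append_of_ne_nil _ htne]
    have hc : π = π.head (by intro h; rw [h] at hlen2; simp at hlen2) :: π.tail :=
      (List.cons_head_tail _).symm
    rw [hc, List.getLast?_cons] at hlast
    rcases h : π.tail.getLast? with _ | x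
    · exact absurd h (by simp [htne])
    · rw [h] at hlast; simpa using hlast

lemma pathWeight_iterCycle (hhead : π.head? = some q)
    (hlast : π.getLast? = some q) (hlen2 : 2 ≤ π.length) :
    ∀ k, pathWeight V (iterCycle π k) = (k + 1 : ℕ) * pathWeight V π := by
  intro k
  induction k with
  | zero => simp [iterCycle]
  | succ k ih =>
    rw [iterCycle, pathWeight_append_tail V _ π q
      (iterCycle_getLast? hlast hlen2 k) hhead, ih]
    push_cast
    ring

lemma OK_iterCycle (hhead : π.head? = some q)
    (hlast : π.getLast? = some q) (hlen2 : 2 ≤ π.length)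
    {Wn : ℕ} (hW : (Wn : ℤ) = pathWeight V π) (k : ℕ) (z : ℕ) :
    OK V (iterCycle π k) z ↔ ∀ j ≤ k, OK V π (z + j * Wn) := by
  induction k with
  | zero =>
    simp only [iterCycle, Nat.le_zero]
    constructor
    · intro h j hj; subst hj; simpa using h
    · intro h; simpa using h 0 rfl
  | succ k ih =>
    rw [iterCycle, OK_append V _ π q (iterCycle_getLast? hlast hlen2 k) hhead z
      (z + (k+1) * Wn)
      (by rw [pathWeight_iterCycle V hhead hlast hlen2 k]; push_cast [hW]; ring),
      ih]
    constructor
    · rintro ⟨h1, h2⟩ j hj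
      rcases Nat.lt_or_ge j (k+1) with h | h
      · exact h1 j (by omega)
      · have hj' : j = k + 1 := by omega
        subst hj'; exact h2
    · intro h
      exact ⟨fun j hj => h j (by omega), h (k+1) le_rfl⟩

lemma isValidRun_iterCycle (hhead : π.head? = some q)
    (hlast : π.getLast? = some q) (hlen2 : 2 ≤ π.length)
    {Wn : ℕ} (hW : (Wn : ℤ) = pathWeight V π) (k : ℕ) (z : ℕ) :
    IsValidRun V (iterCycle π k) z ↔ ∀ j ≤ k, IsValidRun V π (z + j * Wn) := by
  rw [isValidRun_iff_OK, OK_iterCycle V hhead hlast hlen2 hW k z]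
  constructor
  · intro h j hj; rw [isValidRun_iff_OK]; exact h j hj
  · intro h j hj; rw [← isValidRun_iff_OK]; exact h j hj

end CycleLemmas
section PminLemmas
variable (V : OneVASS Q)

lemma foldr_min_le_mem (l : List ℤ) (a : ℤ) (ha : a ∈ l) : l.foldr min 0 ≤ a := by
  induction l with
  | nil => simp at ha
  | cons x xs ih =>
    rcases List.mem_cons.mp ha with rfl | h
    · exact min_le_left _ _
    · exact le_trans (min_le_right _ _) (ih h)

lemma pmin_le_take (π : List Q) (i : ℕ) :
    pmin V π ≤ pathWeight V (π.take i) := by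
  rcases le_or_gt i π.length with h | h
  · apply foldr_min_le_mem
    apply List.mem_map.mpr
    exact ⟨i, List.mem_range.mpr (by omega), rfl⟩
  · rw [List.take_of_length_le (by omega)]
    have := foldr_min_le_mem (((List.range (π.length + 1)).map
      fun i => pathWeight V (π.take i))) (pathWeight V (π.take π.length))
      (List.mem_map.mpr ⟨π.length, List.mem_range.mpr (by omega), rfl⟩)
    rwa [List.take_of_length_le (by omega)] at this

end PminLemmas

section AbstractChains

variable {W : ℕ} (hW : 0 < W) (Val : ℕ → Prop) (Z : Set ℕ) (Lk : ℕ → ℕ → Prop)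
variable (hLk : ∀ z z', Lk z z' ↔ ∃ k, z' = z + (k+1)*W ∧ ∀ j ≤ k, Val (z + j*W))
variable (hZstep : ∀ z ∈ Z, z + W ∈ Z)
variable (hZdvd : ∀ z ∈ Z, ∀ z' ∈ Z, z ≤ z' → W ∣ (z' - z))
variable (hZbetween : ∀ z ∈ Z, ∀ z' ∈ Z, ∀ y, z ≤ y → y ≤ z' → W ∣ (y - z) → y ∈ Z)
variable (hZne : Z.Nonempty)

/-- connectivity: all class values in `[z, z')` are valid -/
def AConn (Val : ℕ → Prop) (Z : Set ℕ) (z z' : ℕ) : Prop :=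
  ∀ b ∈ Z, z ≤ b → b < z' → Val b

def ACC (Val : ℕ → Prop) (Z : Set ℕ) (Lk : ℕ → ℕ → Prop) (S : Set ℕ) : Prop :=
  ∀ z ∈ S, ∀ z' ∈ S, z < z' → Lk z z'

def AMaxCh (Val : ℕ → Prop) (Z : Set ℕ) (Lk : ℕ → ℕ → Prop) (S : Set ℕ) : Prop :=
  S ⊆ Z ∧ ACC Val Z Lk S ∧
    ∀ S', S ⊆ S' → S' ⊆ Z → ACC Val Z Lk S' → S' = S

def ABlk (Val : ℕ → Prop) (Z : Set ℕ) (z : ℕ) : Set ℕ :=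
  {y ∈ Z | AConn Val Z y z ∧ AConn Val Z z y}

include hW hLk hZdvd hZbetween in
lemma lk_iff_conn {z z' : ℕ} (hz : z ∈ Z) (hz' : z' ∈ Z) (hlt : z < z') :
    Lk z z' ↔ AConn Val Z z z' := by
  constructor
  · rintro h b hb hzb hbz'
    rw [hLk] at h
    obtain ⟨k, hk, hval⟩ := h
    obtain ⟨j, hj⟩ := hZdvd z hz b hb hzb
    have hbj : b = z + j * W := by rw [mul_comm] at hj; omega
    have hjk : j ≤ k := by
      by_contra hc
      push_neg at hc
      have := Nat.mul_le_mul_right W (show k + 1 ≤ j by omega)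
      omega
    rw [hbj]
    exact hval j hjk
  · intro hconn
    obtain ⟨m, hm⟩ := hZdvd z hz z' hz' hlt.le
    have hm1 : 1 ≤ m := by
      rcases Nat.eq_zero_or_pos m with rfl | h
      · simp at hm; omega
      · exact h
    have hmW : z' = z + m * W := by rw [mul_comm] at hm; omega
    rw [hLk]
    refine ⟨m - 1, by rw [Nat.sub_add_cancel hm1]; exact hmW, fun j hj => ?_⟩
    have hjm : j < m := by omega
    have hjW : (j + 1) * W ≤ m * W := Nat.mul_le_mul_right W (by omega)
    have hjW' : j * W + W ≤ m * W := by rw [add_mul, one_mul] at hjW; omega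
    have hmem : z + j * W ∈ Z := by
      apply hZbetween z hz z' hz' (z + j*W) (by omega) (by omega)
      exact ⟨j, by rw [mul_comm]; omega⟩
    exact hconn (z + j*W) hmem (by omega) (by omega)

lemma blk_mem_self {z : ℕ} (hz : z ∈ Z) : z ∈ ABlk Val Z z :=
  ⟨hz, fun b _ h1 h2 => absurd (lt_of_le_of_lt h1 h2) (lt_irrefl _),
       fun b _ h1 h2 => absurd (lt_of_le_of_lt h1 h2) (lt_irrefl _)⟩

include hW hLk hZdvd hZbetween in
lemma blk_maxch {z : ℕ} (hz : z ∈ Z) : AMaxCh Val Z Lk (ABlk Val Z z) := by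
  refine ⟨fun y hy => hy.1, ?_, ?_⟩
  · rintro y ⟨hyZ, hy1, hy2⟩ y' ⟨hy'Z, hy'1, hy'2⟩ hlt
    rw [lk_iff_conn hW Val Z Lk hLk hZdvd hZbetween hyZ hy'Z hlt]
    intro b hb h1 h2
    rcases lt_or_ge b z with hbz | hbz
    · exact hy1 b hb h1 hbz
    · exact hy'2 b hb hbz h2
  · intro S' hsub hS'Z hcc
    apply Set.eq_of_subset_of_subset _ hsub
    intro u hu
    have hzS' : z ∈ S' := hsub (blk_mem_self Val Z hz)
    refine ⟨hS'Z hu, ?_, ?_⟩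
    · intro b hb h1 h2
      have hlt : u < z := lt_of_le_of_lt h1 h2
      exact (lk_iff_conn hW Val Z Lk hLk hZdvd hZbetween (hS'Z hu) hz hlt).mp
        (hcc u hu z hzS' hlt) b hb h1 h2
    · intro b hb h1 h2
      have hlt : z < u := lt_of_le_of_lt h1 h2
      exact (lk_iff_conn hW Val Z Lk hLk hZdvd hZbetween hz (hS'Z hu) hlt).mp
        (hcc z hzS' u hu hlt) b hb h1 h2

include hW hLk hZdvd hZbetween in
lemma maxch_eq_blk {S : Set ℕ} (hS : AMaxCh Val Z Lk S) {z : ℕ} (hz : z ∈ S) :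
    S = ABlk Val Z z := by
  have hzZ : z ∈ Z := hS.1 hz
  have hB := blk_maxch hW Val Z Lk hLk hZdvd hZbetween hzZ
  have hsub : S ⊆ ABlk Val Z z := by
    intro u hu
    have huZ : u ∈ Z := hS.1 hu
    refine ⟨huZ, ?_, ?_⟩
    · intro b hb h1 h2
      have hlt : u < z := lt_of_le_of_lt h1 h2
      exact (lk_iff_conn hW Val Z Lk hLk hZdvd hZbetween huZ hzZ hlt).mp
        (hS.2.1 u hu z hz hlt) b hb h1 h2
    · intro b hb h1 h2
      have hlt : z < u := lt_of_le_of_lt h1 h2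
      exact (lk_iff_conn hW Val Z Lk hLk hZdvd hZbetween hzZ huZ hlt).mp
        (hS.2.1 z hz u hu hlt) b hb h1 h2
  exact (hS.2.2 _ hsub hB.1 hB.2.1).symm

include hW hLk hZdvd hZbetween hZne in
lemma maxch_nonempty {S : Set ℕ} (hS : AMaxCh Val Z Lk S) : S.Nonempty := by
  by_contra h
  rw [Set.not_nonempty_iff_eq_empty] at h
  subst h
  obtain ⟨z0, hz0⟩ := hZne
  have hB := blk_maxch hW Val Z Lk hLk hZdvd hZbetween hz0
  have := hS.2.2 (ABlk Val Z z0) (Set.empty_subset _) hB.1 hB.2.1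
  have hmem := blk_mem_self Val Z hz0
  rw [this] at hmem
  exact hmem
def ABad (Val : ℕ → Prop) (Z : Set ℕ) : Set ℕ := {b ∈ Z | ¬ Val b}

include hW hLk hZdvd hZbetween in
lemma val_above {S : Set ℕ} (hS : AMaxCh Val Z Lk S) (hub : ¬ BddAbove S)
    {b : ℕ} (hb : b ∈ Z) {z : ℕ} (hz : z ∈ S) (hzb : z ≤ b) : Val b := by
  obtain ⟨u, hu, hbu⟩ := not_bddAbove_iff.mp hub b
  have hzu : z < u := by omega
  exact (lk_iff_conn hW Val Z Lk hLk hZdvd hZbetween (hS.1 hz) (hS.1 hu)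
    hzu).mp (hS.2.1 z hz u hu hzu) b hb hzb hbu

include hZstep in
lemma iter_mem {z : ℕ} (hz : z ∈ Z) : ∀ n, z + n * W ∈ Z := by
  intro n
  induction n with
  | zero => simpa using hz
  | succ n ih =>
    have : z + (n + 1) * W = (z + n * W) + W := by ring
    rw [this]
    exact hZstep _ ih

include hW hLk hZstep hZdvd hZbetween in
lemma blk_unbounded_of_no_bad {z : ℕ} (hz : z ∈ Z)
    (hno : ∀ b ∈ ABad Val Z, b < z) : ¬ BddAbove (ABlk Val Z z) := by
  have hmem : ∀ n, z + n * W ∈ ABlk Val Z z := by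
    intro n
    refine ⟨iter_mem Z hZstep hz n, ?_, ?_⟩
    · intro b hb h1 h2
      by_contra hv
      have := hno b ⟨hb, hv⟩
      omega
    · intro b hb h1 h2
      by_contra hv
      have := hno b ⟨hb, hv⟩
      omega
  rw [not_bddAbove_iff]
  intro x
  refine ⟨z + (x + 1) * W, hmem (x + 1), ?_⟩
  have : x + 1 ≤ (x + 1) * W := Nat.le_mul_of_pos_right _ hW
  omega

include hW hLk hZstep hZdvd hZbetween hZne in
lemma exists_unbounded_maxch (hBadFin : (ABad Val Z).Finite) :
    ∃ S, AMaxCh Val Z Lk S ∧ ¬ BddAbove S := by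
  obtain ⟨z0, hz0⟩ := hZne
  obtain ⟨M, hM⟩ := hBadFin.bddAbove
  · set zs := z0 + (M + 1) * W with hzs
    have hzsZ : zs ∈ Z := iter_mem Z hZstep hz0 (M + 1)
    have hMzs : M < zs := by
      have : M + 1 ≤ (M + 1) * W := Nat.le_mul_of_pos_right _ hW
      omega
    refine ⟨ABlk Val Z zs, blk_maxch hW Val Z Lk hLk hZdvd hZbetween hzsZ, ?_⟩
    exact blk_unbounded_of_no_bad hW Val Z Lk hLk hZstep hZdvd hZbetween hzsZ
      (fun b hb => by have := hM hb; omega)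

include hW hLk hZdvd hZbetween in
lemma unbounded_maxch_unique {S1 S2 : Set ℕ}
    (h1 : AMaxCh Val Z Lk S1) (hu1 : ¬ BddAbove S1)
    (h2 : AMaxCh Val Z Lk S2) (hu2 : ¬ BddAbove S2) : S1 = S2 := by
  have hcc : ACC Val Z Lk (S1 ∪ S2) := by
    intro z hz z' hz' hlt
    have hzZ : z ∈ Z := by rcases hz with h | h; exacts [h1.1 h, h2.1 h]
    have hz'Z : z' ∈ Z := by rcases hz' with h | h; exacts [h1.1 h, h2.1 h]
    rw [lk_iff_conn hW Val Z Lk hLk hZdvd hZbetween hzZ hz'Z hlt]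
    intro b hb hzb hbz'
    rcases hz with h | h
    · exact val_above hW Val Z Lk hLk hZdvd hZbetween h1 hu1 hb h hzb
    · exact val_above hW Val Z Lk hLk hZdvd hZbetween h2 hu2 hb h hzb
  have e1 := h1.2.2 (S1 ∪ S2) Set.subset_union_left
    (Set.union_subset h1.1 h2.1) hcc
  have e2 := h2.2.2 (S1 ∪ S2) Set.subset_union_right
    (Set.union_subset h1.1 h2.1) hcc
  exact e1.symm.trans e2

include hW hLk hZstep hZdvd hZbetween hZne in
lemma bounded_maxch_has_bad {S : Set ℕ} (hS : AMaxCh Val Z Lk S)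
    (hbd : BddAbove S) : ∃ b, b ∈ S ∧ b ∈ ABad Val Z := by
  classical
  obtain ⟨z, hz⟩ := maxch_nonempty hW Val Z Lk hLk hZdvd hZbetween hZne hS
  have hSblk : S = ABlk Val Z z := maxch_eq_blk hW Val Z Lk hLk hZdvd hZbetween hS hz
  have hzZ : z ∈ Z := hS.1 hz
  have hex : ∃ n, n ∈ ABad Val Z ∧ z ≤ n := by
    by_contra hno
    push_neg at hno
    have : ∀ b ∈ ABad Val Z, b < z := by
      intro b hb
      rcases lt_or_ge b z with h | h
      · exact h
      · exact absurd (hno b hb) (by omega)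
    exact (blk_unbounded_of_no_bad hW Val Z Lk hLk hZstep hZdvd hZbetween hzZ this)
      (hSblk ▸ hbd)
  set b := Nat.find hex with hbdef
  obtain ⟨hbBad, hzb⟩ := Nat.find_spec hex
  refine ⟨b, ?_, hbBad⟩
  rw [hSblk]
  refine ⟨hbBad.1, ?_, ?_⟩
  · intro b' hb' h1 h2
    omega
  · intro b' hb' h1 h2
    by_contra hv
    exact Nat.find_min hex h2 ⟨⟨hb', hv⟩, h1⟩

include hW hLk hZdvd hZbetween in
lemma maxch_disjoint {S S' : Set ℕ} (hS : AMaxCh Val Z Lk S)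
    (hS' : AMaxCh Val Z Lk S') {u : ℕ} (hu : u ∈ S) (hu' : u ∈ S') : S = S' := by
  rw [maxch_eq_blk hW Val Z Lk hLk hZdvd hZbetween hS hu,
      maxch_eq_blk hW Val Z Lk hLk hZdvd hZbetween hS' hu']

include hW hLk hZstep hZdvd hZbetween hZne in
lemma bounded_maxch_finite_card (hBadFin : (ABad Val Z).Finite) :
    {S | AMaxCh Val Z Lk S ∧ BddAbove S}.Finite ∧
    {S | AMaxCh Val Z Lk S ∧ BddAbove S}.ncard ≤ (ABad Val Z).ncard := by
  classical
  set f : Set ℕ → ℕ := fun S => if h : ∃ b, b ∈ S ∧ b ∈ ABad Val Z then h.choose else 0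
    with hf
  have hfS : ∀ S ∈ {S | AMaxCh Val Z Lk S ∧ BddAbove S}, f S ∈ S ∧ f S ∈ ABad Val Z := by
    rintro S ⟨h1, h2⟩
    have hex := bounded_maxch_has_bad hW Val Z Lk hLk hZstep hZdvd hZbetween hZne h1 h2
    rw [hf]
    simp only [dif_pos hex]
    exact hex.choose_spec
  have hinj : Set.InjOn f {S | AMaxCh Val Z Lk S ∧ BddAbove S} := by
    rintro S hS S' hS' he
    have h1 := hfS S hS
    have h2 := hfS S' hS'
    rw [he] at h1
    exact maxch_disjoint hW Val Z Lk hLk hZdvd hZbetween hS.1 hS'.1 h1.1 h2.1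
  constructor
  · exact Set.Finite.of_finite_image
      (hBadFin.subset (by rintro x ⟨S, hS, rfl⟩; exact (hfS S hS).2)) hinj
  · exact Set.ncard_le_ncard_of_injOn f (fun S hS => (hfS S hS).2) hinj hBadFin

end AbstractChains
/-- chains partition each residue class, which decomposes into at most `2|Q|`
bounded chains and exactly one unbounded chain. -/
theorem chains_partition_residue_class
    {Q : Type} [Fintype Q] (V : OneVASS Q) (hD : SingleGuard V)
    (γ : Q → List Q) (hγ : GammaChoice V γ)
    (q : Q) (hq : q ∈ Qplus V) (r : ℕ) (hr : r < Wnat V γ q) :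
    (∀ c ∈ resClass V γ q r, ∃! C, IsChainIn V γ q r C ∧ c ∈ C) ∧
    {C | IsChainIn V γ q r C ∧ chainBounded C}.Finite ∧
    {C | IsChainIn V γ q r C ∧ chainBounded C}.ncard ≤ 2 * Fintype.card Q ∧
    (∃! C, IsChainIn V γ q r C ∧ ¬ chainBounded C) := by
  classical
  obtain ⟨hsc, hpos, -⟩ := hγ q hq
  obtain ⟨⟨hpath, hlen2, hhead, hlast⟩, hnodup⟩ := hsc
  set π : List Q := γ q with hπ
  set W : ℕ := Wnat V γ q with hWdef
  have hWeq : (W : ℤ) = pathWeight V π := by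
    rw [hWdef, Wnat, Int.toNat_of_nonneg hpos.le]
  have hW0 : 0 < W := by
    have : (0 : ℤ) < (W : ℤ) := hWeq ▸ hpos
    exact_mod_cast this
  set pm : ℤ := pmin V π with hpm
  set Val : ℕ → Prop := fun z => IsValidRun V π z with hVal
  set Z : Set ℕ := {z | z % W = r ∧ 0 ≤ (z : ℤ) + pm} with hZ
  set Lk : ℕ → ℕ → Prop := fun z z' => chainLinked V γ q z z' with hLkdef
  -- characterization of chainLinked
  have hLk : ∀ z z', Lk z z' ↔ ∃ k, z' = z + (k+1)*W ∧ ∀ j ≤ k, Val (z + j*W) := by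
    intro z z'
    constructor
    · rintro ⟨k, hrun, heq⟩
      rw [← hπ, pathWeight_iterCycle V hhead hlast hlen2 k, ← hWeq] at heq
      refine ⟨k, by exact_mod_cast heq, ?_⟩
      rw [← hπ] at hrun
      exact (isValidRun_iterCycle V hhead hlast hlen2 hWeq k z).mp hrun
    · rintro ⟨k, heq, hval⟩
      refine ⟨k, ?_, ?_⟩
      · rw [← hπ]
        exact (isValidRun_iterCycle V hhead hlast hlen2 hWeq k z).mpr hval
      · rw [← hπ, pathWeight_iterCycle V hhead hlast hlen2 k, ← hWeq]
        exact_mod_cast congrArg (fun n : ℕ => (n : ℤ)) heq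
  -- properties of Z
  have hZstep : ∀ z ∈ Z, z + W ∈ Z := by
    rintro z ⟨h1, h2⟩
    refine ⟨by rw [Nat.add_mod_right]; exact h1, by push_cast; omega⟩
  have hZdvd : ∀ z ∈ Z, ∀ z' ∈ Z, z ≤ z' → W ∣ z' - z := by
    rintro z ⟨h1, -⟩ z' ⟨h1', -⟩ hle
    exact (Nat.modEq_iff_dvd' hle).mp (h1.trans h1'.symm)
  have hZbetween : ∀ z ∈ Z, ∀ z' ∈ Z, ∀ y, z ≤ y → y ≤ z' → W ∣ (y - z) → y ∈ Z := by
    rintro z ⟨h1, h2⟩ z' hz' y hzy hyz' ⟨c, hc⟩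
    have hy : y = z + W * c := by omega
    refine ⟨?_, by push_cast; omega⟩
    rw [hy, Nat.add_mul_mod_self_left]
    exact h1
  have hZne : Z.Nonempty := by
    refine ⟨r + W * pm.natAbs, ?_, ?_⟩
    · rw [Nat.add_mul_mod_self_left]; exact Nat.mod_eq_of_lt hr
    · have h1 : pm.natAbs ≤ W * pm.natAbs := Nat.le_mul_of_pos_left _ hW0
      have h3 : ((r + W * pm.natAbs : ℕ) : ℤ) = (r : ℤ) + ((W * pm.natAbs : ℕ) : ℤ) := by
        push_cast; ring
      have h5 : ((pm.natAbs : ℕ) : ℤ) ≤ ((W * pm.natAbs : ℕ) : ℤ) := by exact_mod_cast h1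
      rw [h3]
      omega
  -- the bad set is small
  set gval : Q → ℕ := fun p => if h : ∃ g : ℕ, V.D p = {g}ᶜ then h.choose else 0
    with hgval
  set f : ℕ → ℕ :=
    fun i => ((gval (π.getD i q) : ℤ) - pathWeight V (π.take (i+1))).toNat with hf
  have hsubBad : ABad Val Z ⊆ f '' ((Finset.range π.length : Finset ℕ) : Set ℕ) := by
    rintro b ⟨⟨hmod, hpmb⟩, hnv⟩
    have hrun : IsRun V π b := by
      refine ⟨hpath, fun i hi => ?_⟩
      rw [counterAt]
      have := pmin_le_take V π (i+1)
      rw [← hpm] at this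
      omega
    have hguard : ¬ ∀ i, ∀ h : i < π.length,
        (counterAt V b π i).toNat ∈ V.D (π.get ⟨i, h⟩) := fun h => hnv ⟨hrun, h⟩
    push_neg at hguard
    obtain ⟨i, hi, hmem⟩ := hguard
    rcases hD (π.get ⟨i, hi⟩) with huniv | ⟨g, hg⟩
    · rw [huniv] at hmem; exact absurd (Set.mem_univ _) hmem
    · rw [hg] at hmem
      simp only [Set.mem_compl_iff, Set.mem_singleton_iff, not_not] at hmem
      have hnn : 0 ≤ counterAt V b π i := hrun.2 i hi
      rw [counterAt] at hnn hmem
      have hbg : (b : ℤ) + pathWeight V (π.take (i+1)) = g := by omega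
      have hgv : gval (π.getD i q) = g := by
        have hget : π.getD i q = π.get ⟨i, hi⟩ := by
          rw [List.getD_eq_getElem _ _ hi, List.get_eq_getElem]
        rw [hget, hgval]
        have hex : ∃ g' : ℕ, V.D (π.get ⟨i, hi⟩) = {g'}ᶜ := ⟨g, hg⟩
        simp only [dif_pos hex]
        have hcs := hex.choose_spec
        have h2 := Set.ext_iff.mp (hg.symm.trans hcs) g
        simp only [Set.mem_compl_iff, Set.mem_singleton_iff, not_iff_not] at h2
        exact (h2.mp trivial).symm
      refine ⟨i, by simp [Finset.mem_range]; omega, ?_⟩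
      rw [hf]
      simp only
      rw [hgv]
      omega
  have hBadFin : (ABad Val Z).Finite :=
    ((Finset.range π.length).finite_toSet.image f).subset hsubBad
  have hBadCard : (ABad Val Z).ncard ≤ π.length := by
    calc (ABad Val Z).ncard
        ≤ (f '' ((Finset.range π.length : Finset ℕ) : Set ℕ)).ncard :=
          Set.ncard_le_ncard hsubBad ((Finset.range π.length).finite_toSet.image f)
      _ ≤ ((Finset.range π.length : Finset ℕ) : Set ℕ).ncard :=
          Set.ncard_image_le (Finset.range π.length).finite_toSet
      _ = π.length := by rw [Set.ncard_coe_finset, Finset.card_range]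
  have hlenQ : π.length ≤ Fintype.card Q + 1 := by
    have h1 : π.dropLast.length ≤ Fintype.card Q := hnodup.length_le_card
    have h2 : π.dropLast.length = π.length - 1 := List.length_dropLast (xs := π)
    omega
  have hcardQ : 1 ≤ Fintype.card Q := Fintype.card_pos_iff.mpr ⟨q⟩
  -- lifting
  set lift : Set ℕ → Set (Q × ℕ) := fun S => {c | c.1 = q ∧ c.2 ∈ S} with hlift
  have hliftinj : Function.Injective lift := by
    intro S T h
    ext z
    have h2 : ((q, z) ∈ lift S) ↔ ((q, z) ∈ lift T) := by rw [h]
    simpa [hlift] using h2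
  have hres : resClass V γ q r = lift Z := by
    ext ⟨p, z⟩
    simp only [resClass, ConfPlus, Set.mem_setOf_eq, hlift, hZ]
    constructor
    · rintro ⟨⟨hp1, hp2⟩, rfl, hmod⟩
      exact ⟨rfl, hmod, by rw [← hπ] at hp2; exact hp2⟩
    · rintro ⟨rfl, hmod, hpmz⟩
      exact ⟨⟨hq, by rw [← hπ]; exact hpmz⟩, rfl, hmod⟩
  have hCC : ∀ S : Set ℕ, ChainCond V γ q (lift S) ↔ ACC Val Z Lk S := by
    intro S
    constructor
    · intro h z hz z' hz' hlt
      exact h (q, z) ⟨rfl, hz⟩ (q, z') ⟨rfl, hz'⟩ hlt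
    · rintro h ⟨p, z⟩ ⟨hp, hz⟩ ⟨p', z'⟩ ⟨hp', hz'⟩ hlt
      exact h z hz z' hz' hlt
  have hproj : ∀ C : Set (Q × ℕ), C ⊆ resClass V γ q r →
      C = lift {z | (q, z) ∈ C} := by
    intro C hC
    ext ⟨p, z⟩
    constructor
    · intro h
      have hm := hC h
      rw [hres] at hm
      exact ⟨hm.1, by exact hm.1 ▸ h⟩
    · rintro ⟨hp, h⟩
      cases hp
      exact h
  have hchain : ∀ C, IsChainIn V γ q r C ↔ ∃ S, AMaxCh Val Z Lk S ∧ C = lift S := by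
    intro C
    constructor
    · rintro ⟨hsub, hcc, hmax⟩
      refine ⟨{z | (q, z) ∈ C}, ⟨?_, ?_, ?_⟩, hproj C hsub⟩
      · intro z hz
        have := hsub hz
        rw [hres] at this
        exact this.2
      · rw [← hCC, ← hproj C hsub]; exact hcc
      · intro S' h1 h2 h3
        have heq := hmax (lift S')
          (by rw [hproj C hsub]; intro c hc; exact ⟨hc.1, h1 hc.2⟩)
          (by rw [hres]; intro c hc; exact ⟨hc.1, h2 hc.2⟩)
          ((hCC S').mpr h3)
        apply hliftinj
        rw [heq]
        exact hproj C hsub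
    · rintro ⟨S, ⟨hSZ, hScc, hSmax⟩, rfl⟩
      refine ⟨?_, (hCC S).mpr hScc, ?_⟩
      · rw [hres]; intro c hc; exact ⟨hc.1, hSZ hc.2⟩
      · intro C' h1 h2 h3
        have hC'pr := hproj C' h2
        have hSS : {z | (q, z) ∈ C'} = S := by
          apply hSmax
          · intro z hz
            exact h1 ⟨rfl, hz⟩
          · intro z hz
            have := h2 hz
            rw [hres] at this
            exact this.2
          · rw [← hCC, ← hC'pr]; exact h3
        rw [hC'pr, hSS]
  have hbddiff : ∀ S : Set ℕ, chainBounded (lift S) ↔ BddAbove S := by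
    intro S
    have himg : Prod.snd '' (lift S) = S := by
      ext z
      constructor
      · rintro ⟨⟨p, y⟩, ⟨hp, hy⟩, rfl⟩
        exact hy
      · intro h
        exact ⟨(q, z), ⟨rfl, h⟩, rfl⟩
    rw [chainBounded, himg]
  -- assemble
  refine ⟨?_, ?_, ?_, ?_⟩
  · rintro ⟨p, z⟩ hc
    rw [hres] at hc
    obtain ⟨hp, hz⟩ := hc
    cases hp
    refine ⟨lift (ABlk Val Z z), ⟨(hchain _).mpr
      ⟨ABlk Val Z z, blk_maxch hW0 Val Z Lk hLk hZdvd hZbetween hz, rfl⟩,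
      ⟨rfl, blk_mem_self Val Z hz⟩⟩, ?_⟩
    rintro C' ⟨hch, hmem⟩
    obtain ⟨S, hm, rfl⟩ := (hchain C').mp hch
    have hzS : z ∈ S := hmem.2
    rw [maxch_eq_blk hW0 Val Z Lk hLk hZdvd hZbetween hm hzS]
  · have heqset : {C | IsChainIn V γ q r C ∧ chainBounded C}
        = lift '' {S | AMaxCh Val Z Lk S ∧ BddAbove S} := by
      ext C
      constructor
      · rintro ⟨hch, hbd⟩
        obtain ⟨S, hm, rfl⟩ := (hchain C).mp hch
        exact ⟨S, ⟨hm, (hbddiff S).mp hbd⟩, rfl⟩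
      · rintro ⟨S, ⟨hm, hbd⟩, rfl⟩
        exact ⟨(hchain _).mpr ⟨S, hm, rfl⟩, (hbddiff S).mpr hbd⟩
    rw [heqset]
    exact ((bounded_maxch_finite_card hW0 Val Z Lk hLk hZstep hZdvd hZbetween hZne
      hBadFin).1).image lift
  · have heqset : {C | IsChainIn V γ q r C ∧ chainBounded C}
        = lift '' {S | AMaxCh Val Z Lk S ∧ BddAbove S} := by
      ext C
      constructor
      · rintro ⟨hch, hbd⟩
        obtain ⟨S, hm, rfl⟩ := (hchain C).mp hch
        exact ⟨S, ⟨hm, (hbddiff S).mp hbd⟩, rfl⟩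
      · rintro ⟨S, ⟨hm, hbd⟩, rfl⟩
        exact ⟨(hchain _).mpr ⟨S, hm, rfl⟩, (hbddiff S).mpr hbd⟩
    rw [heqset, Set.ncard_image_of_injective _ hliftinj]
    calc {S | AMaxCh Val Z Lk S ∧ BddAbove S}.ncard
        ≤ (ABad Val Z).ncard :=
          (bounded_maxch_finite_card hW0 Val Z Lk hLk hZstep hZdvd hZbetween hZne
            hBadFin).2
      _ ≤ 2 * Fintype.card Q := by omega
  · obtain ⟨S, hS, hSu⟩ := exists_unbounded_maxch hW0 Val Z Lk hLk hZstep hZdvd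
      hZbetween hZne hBadFin
    refine ⟨lift S, ⟨(hchain _).mpr ⟨S, hS, rfl⟩, by rw [hbddiff]; exact hSu⟩, ?_⟩
    rintro C' ⟨hch, hub⟩
    obtain ⟨S', hm', rfl⟩ := (hchain C').mp hch
    rw [hbddiff] at hub
    rw [unbounded_maxch_unique hW0 Val Z Lk hLk hZdvd hZbetween hm' hub hS hSu]

end VASSPaper
end
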